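/- The inverse of the (p+1)-dimensional Hilbert matrix H with entries H_{ij} = 1/(i+j-1) has entries (H^{-1})_{ij} = (-1)^{i+j} (i+j-1) * C(p+i, p+1-j) * C(p+j, p+1-i) * C(i+j-2, i-1)^2, where C denotes the binomial coefficient. -/

import Mathlib

open Finset Nat Polynomial

private lemma natProdShift (k : ℕ) : ∀ n : ℕ, (∏ m ∈ Finset.range n, (k + m + 1)) * k ! = (k + n)!
  | 0 => by simp
  | n + 1 => by
    rw [Finset.prod_range_succ, mul_right_comm, natProdShift k n, ← add_assoc,
      Nat.factorial_succ, mul_comm]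

private lemma natProdRev : ∀ n : ℕ, (∏ m ∈ Finset.range n, (n - m)) = n !
  | 0 => by simp
  | n + 1 => by
    rw [Finset.prod_range_succ']
    have h : (∏ m ∈ Finset.range n, (n + 1 - (m + 1))) = n ! := by
      rw [← natProdRev n]
      refine Finset.prod_congr rfl fun m hm => ?_
      simp only [Finset.mem_range] at hm; omega
    rw [h, Nat.factorial_succ, Nat.sub_zero, mul_comm]

private lemma finEraseProd {p : ℕ} (f : ℕ → ℝ) (j : Fin (p + 1)) :
    ∏ m ∈ Finset.univ.erase j, f (m : ℕ) = ∏ m ∈ (Finset.range (p + 1)).erase (j : ℕ), f m := by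
  have h1 : ∏ m ∈ Finset.univ.erase j, f (m : ℕ)
      = ∏ m : Fin (p + 1), (if (m : ℕ) = (j : ℕ) then 1 else f (m : ℕ)) := by
    rw [← Finset.prod_erase (a := j) Finset.univ (by simp)]
    refine Finset.prod_congr rfl fun m hm => ?_
    rw [if_neg (by simpa [Fin.val_eq_val] using (Finset.mem_erase.mp hm).1)]
  have h2 : ∏ m ∈ (Finset.range (p + 1)).erase (j : ℕ), f m
      = ∏ m ∈ Finset.range (p + 1), (if m = (j : ℕ) then 1 else f m) := by
    rw [← Finset.prod_erase (a := (j : ℕ)) (Finset.range (p + 1)) (by simp)]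
    exact Finset.prod_congr rfl fun m hm => by rw [if_neg (Finset.mem_erase.mp hm).1]
  rw [h1, h2, Fin.prod_univ_eq_prod_range (fun m => if m = (j : ℕ) then 1 else f m)]

private lemma eraseNodeProd {p : ℕ} (j : ℕ) (hj : j ≤ p) :
    ∏ m ∈ (Finset.range (p + 1)).erase j, ((m : ℝ) - j)
      = (-1) ^ j * (j)! * (p - j)! := by
  have hsplit : (Finset.range (p + 1)).erase j
      = Finset.range j ∪ Finset.Ico (j + 1) (p + 1) := by
    ext m; simp [Finset.mem_erase, Finset.mem_range, Finset.mem_Ico]; omega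
  have hdisj : Disjoint (Finset.range j) (Finset.Ico (j + 1) (p + 1)) := by
    simp only [Finset.disjoint_left, Finset.mem_range, Finset.mem_Ico]
    intro a ha; omega
  rw [hsplit, Finset.prod_union hdisj]
  have e1 : ∏ m ∈ Finset.range j, ((m : ℝ) - j) = (-1) ^ j * (j)! := by
    have : ∀ m ∈ Finset.range j, ((m : ℝ) - j) = (-1) * ((j - m : ℕ) : ℝ) := by
      intro m hm
      simp only [Finset.mem_range] at hm
      rw [Nat.cast_sub hm.le]; ring
    rw [Finset.prod_congr rfl this, Finset.prod_mul_distrib, Finset.prod_const,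
      ← Nat.cast_prod, natProdRev, Finset.card_range]
  have e2 : ∏ m ∈ Finset.Ico (j + 1) (p + 1), ((m : ℝ) - j) = ((p - j)! : ℝ) := by
    rw [Finset.prod_Ico_eq_prod_range]
    have h3 : ∀ m ∈ Finset.range (p + 1 - (j + 1)),
        (((j + 1 + m : ℕ) : ℝ) - j) = ((m : ℕ) + 1 : ℝ) := by
      intro m _; push_cast; ring
    rw [Finset.prod_congr rfl h3]
    have h4 : p + 1 - (j + 1) = p - j := by omega
    rw [h4]
    rw [← Finset.prod_range_add_one_eq_factorial (p - j)]
    push_cast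
    rfl
  rw [e1, e2]

private lemma star (p : ℕ) (i j : Fin (p + 1)) :
    ∑ k : Fin (p + 1), (∏ m ∈ Finset.univ.erase j, (((k : ℕ) : ℝ) + (m : ℕ) + 1)) *
      ∏ m ∈ Finset.univ.erase k, ((((k : ℕ) : ℝ) - ((m : ℕ) : ℝ))⁻¹ *
        (-((i : ℕ) : ℝ) - 1 - ((m : ℕ) : ℝ)))
    = ∏ m ∈ Finset.univ.erase j, (((m : ℕ) : ℝ) - ((i : ℕ) : ℝ)) := by
  set v : Fin (p + 1) → ℝ := fun k => ((k : ℕ) : ℝ) with hv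
  have hvs : Set.InjOn v (Finset.univ : Finset (Fin (p + 1))) := by
    intro a _ b _ hab
    exact Fin.val_injective (Nat.cast_injective hab)
  set f : ℝ[X] := ∏ m ∈ Finset.univ.erase j, (X - Polynomial.C (-((m : ℕ) : ℝ) - 1)) with hf
  have hdeg : f.degree < (Finset.univ : Finset (Fin (p + 1))).card := by
    rw [hf, Polynomial.degree_prod]
    simp only [Polynomial.degree_X_sub_C]
    rw [Finset.sum_const, Finset.card_erase_of_mem (Finset.mem_univ j), Finset.card_univ,
      Fintype.card_fin]
    simp only [nsmul_eq_mul, mul_one]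
    exact_mod_cast Nat.lt_succ_self p
  have heq := Lagrange.eq_interpolate hvs hdeg
  have this1 := congrArg (Polynomial.eval (-((i : ℕ) : ℝ) - 1)) heq
  rw [Lagrange.interpolate_apply] at this1
  simp only [Polynomial.eval_finset_sum, Polynomial.eval_mul, Polynomial.eval_C,
    Lagrange.basis, Lagrange.basisDivisor, Polynomial.eval_prod, Polynomial.eval_sub,
    Polynomial.eval_X, hf, hv] at this1
  have L : (∑ k : Fin (p + 1), (∏ m ∈ Finset.univ.erase j, (((k : ℕ) : ℝ) + (m : ℕ) + 1)) *
      ∏ m ∈ Finset.univ.erase k, ((((k : ℕ) : ℝ) - ((m : ℕ) : ℝ))⁻¹ *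
        (-((i : ℕ) : ℝ) - 1 - ((m : ℕ) : ℝ))))
      = ∑ k : Fin (p + 1), (∏ m ∈ Finset.univ.erase j, (((k : ℕ) : ℝ) - (-((m : ℕ) : ℝ) - 1))) *
      ∏ m ∈ Finset.univ.erase k, ((((k : ℕ) : ℝ) - ((m : ℕ) : ℝ))⁻¹ *
        (-((i : ℕ) : ℝ) - 1 - ((m : ℕ) : ℝ))) := by
    refine Finset.sum_congr rfl fun k _ => ?_
    congr 1
    exact Finset.prod_congr rfl fun m _ => by ring
  have R : (∏ m ∈ Finset.univ.erase j, (-((i : ℕ) : ℝ) - 1 - (-((m : ℕ) : ℝ) - 1)))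
      = ∏ m ∈ Finset.univ.erase j, (((m : ℕ) : ℝ) - ((i : ℕ) : ℝ)) :=
    Finset.prod_congr rfl fun m _ => by ring
  rw [L, ← this1, R]

private lemma natKey (p j k : ℕ) (hj : j ≤ p) (hk : k ≤ p) :
    (k + j + 1) ^ 2 * Nat.choose (p + k + 1) (p - j) * Nat.choose (p + j + 1) (p - k) *
      (Nat.choose (k + j) k) ^ 2 * (j !) ^ 2 * (k !) ^ 2 * (p - j)! * (p - k)!
    = (p + k + 1)! * (p + j + 1)! := by
  have h1 : Nat.choose (p + k + 1) (p - j) * (p - j)! * (k + j + 1)! = (p + k + 1)! := by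
    have := Nat.choose_mul_factorial_mul_factorial (show p - j ≤ p + k + 1 by omega)
    rwa [show p + k + 1 - (p - j) = k + j + 1 by omega] at this
  have h2 : Nat.choose (p + j + 1) (p - k) * (p - k)! * (k + j + 1)! = (p + j + 1)! := by
    have := Nat.choose_mul_factorial_mul_factorial (show p - k ≤ p + j + 1 by omega)
    rwa [show p + j + 1 - (p - k) = k + j + 1 by omega] at this
  have h3 : Nat.choose (k + j) k * k ! * j ! = (k + j)! := by
    have := Nat.choose_mul_factorial_mul_factorial (show k ≤ k + j by omega)
    rwa [show k + j - k = j by omega] at this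
  have e : (k + j + 1)! = (k + j + 1) * (k + j)! := Nat.factorial_succ (k + j)
  calc (k + j + 1) ^ 2 * Nat.choose (p + k + 1) (p - j) * Nat.choose (p + j + 1) (p - k) *
      (Nat.choose (k + j) k) ^ 2 * (j !) ^ 2 * (k !) ^ 2 * (p - j)! * (p - k)!
      = (Nat.choose (p + k + 1) (p - j) * (p - j)! *
          ((k + j + 1) * (Nat.choose (k + j) k * k ! * j !))) *
        (Nat.choose (p + j + 1) (p - k) * (p - k)! *
          ((k + j + 1) * (Nat.choose (k + j) k * k ! * j !))) := by ring
    _ = (Nat.choose (p + k + 1) (p - j) * (p - j)! * (k + j + 1)!) *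
        (Nat.choose (p + j + 1) (p - k) * (p - k)! * (k + j + 1)!) := by rw [h3, ← e]
    _ = (p + k + 1)! * (p + j + 1)! := by rw [h1, h2]

private lemma realKey (p j k : ℕ) (hj : j ≤ p) (hk : k ≤ p) :
    ((k : ℝ) + j + 1) ^ 2 * (Nat.choose (p + k + 1) (p - j) : ℝ) *
      (Nat.choose (p + j + 1) (p - k) : ℝ) * ((Nat.choose (k + j) k : ℝ)) ^ 2 *
      ((j)! : ℝ) ^ 2 * ((k)! : ℝ) ^ 2 * ((p - j)! : ℝ) * ((p - k)! : ℝ)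
    = ((p + k + 1)! : ℝ) * ((p + j + 1)! : ℝ) := by
  exact_mod_cast congrArg (Nat.cast : ℕ → ℝ) (natKey p j k hj hk)

private lemma prodFull (p i : ℕ) :
    (∏ m : Fin (p + 1), ((i : ℝ) + (m : ℕ) + 1)) * ((i)! : ℝ) = ((i + p + 1)! : ℝ) := by
  rw [Fin.prod_univ_eq_prod_range (fun m => ((i : ℝ) + m + 1)) (p + 1)]
  have h := natProdShift i (p + 1)
  have h2 : ((∏ m ∈ Finset.range (p + 1), (i + m + 1) : ℕ) : ℝ)
      = ∏ m ∈ Finset.range (p + 1), ((i : ℝ) + m + 1) := by push_cast; rfl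
  rw [← h2, ← Nat.cast_mul, h, show i + (p + 1) = i + p + 1 by omega]

private lemma prodDerase (p : ℕ) (j : Fin (p + 1)) :
    ∏ m ∈ Finset.univ.erase j, (((m : ℕ) : ℝ) - ((j : ℕ) : ℝ))
      = (-1) ^ (j : ℕ) * (((j : ℕ))! : ℝ) * ((p - (j : ℕ))! : ℝ) := by
  rw [finEraseProd (fun m => (m : ℝ) - ((j : ℕ) : ℝ)) j]
  exact eraseNodeProd (j : ℕ) (Nat.lt_succ_iff.mp j.isLt)

private lemma prodQ (p : ℕ) (k : Fin (p + 1)) :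
    ∏ m ∈ Finset.univ.erase k, (((k : ℕ) : ℝ) - ((m : ℕ) : ℝ))
      = (-1) ^ (p + (k : ℕ)) * (((k : ℕ))! : ℝ) * ((p - (k : ℕ))! : ℝ) := by
  have h : ∀ m ∈ Finset.univ.erase k,
      ((k : ℕ) : ℝ) - ((m : ℕ) : ℝ) = (-1) * (((m : ℕ) : ℝ) - ((k : ℕ) : ℝ)) :=
    fun m _ => by ring
  rw [Finset.prod_congr rfl h, Finset.prod_mul_distrib, Finset.prod_const,
    Finset.card_erase_of_mem (Finset.mem_univ k), Finset.card_univ, Fintype.card_fin,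
    Nat.add_sub_cancel, prodDerase, pow_add]
  ring

private lemma keyArith (p j k : ℕ) (hj : j ≤ p) (hk : k ≤ p) (x Pi : ℝ) (hx : x ≠ 0) :
    1 / x * ((-1 : ℝ) ^ (k + j) * ((k : ℝ) + j + 1) * (Nat.choose (p + k + 1) (p - j) : ℝ) *
        (Nat.choose (p + j + 1) (p - k) : ℝ) * (Nat.choose (k + j) k : ℝ) ^ 2) *
      ((-1 : ℝ) ^ p * Pi * ((-1 : ℝ) ^ (p + j) * ((j)! : ℝ) ^ 2 * ((p - j)! : ℝ) /
        ((p + j + 1)! : ℝ)))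
    = ((k + p + 1)! : ℝ) / (((k)! : ℝ) * ((k : ℝ) + j + 1)) *
      (((-1 : ℝ) ^ (p + k) * ((k)! : ℝ) * ((p - k)! : ℝ))⁻¹ * ((-1 : ℝ) ^ p * (Pi / x))) := by
  have hrk := realKey p j k hj hk
  have hkj : ((k : ℝ) + j + 1) ≠ 0 := by positivity
  have fne : ∀ n : ℕ, ((n ! : ℕ) : ℝ) ≠ 0 := fun n =>
    Nat.cast_ne_zero.mpr (Nat.factorial_ne_zero n)
  have hkp : (k + p + 1)! = (p + k + 1)! := by rw [show k + p + 1 = p + k + 1 by ring]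
  simp only [pow_add]
  rcases Nat.even_or_odd p with hp | hp <;>
    rcases Nat.even_or_odd j with hjp | hjp <;>
      rcases Nat.even_or_odd k with hkp2 | hkp2 <;>
  · simp only [hp.neg_one_pow, hjp.neg_one_pow, hkp2.neg_one_pow, Odd.neg_one_pow,
      Even.neg_one_pow]
    rw [hkp]
    field_simp
    first
    | linear_combination Pi * hrk
    | linear_combination (Pi * x) * hrk
    | linear_combination (Pi * x - Pi) * hrk
    | linear_combination (Pi - Pi * x) * hrk
    | linear_combination (2 * Pi * x - Pi) * hrk
    | linear_combination (Pi - 2 * Pi * x) * hrk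
    | linear_combination (-Pi) * hrk
    | linear_combination (-(Pi * x)) * hrk

/-- The inverse of the (p+1)-dimensional Hilbert matrix `H` with entries
`H i j = 1/(i+j-1)` (1-based indexing) has entries
`(H⁻¹) i j = (-1)^(i+j) (i+j-1) C(p+i, p+1-j) C(p+j, p+1-i) C(i+j-2, i-1)^2`.
Here indices `i j : Fin (p+1)` correspond to the 1-based indices `i+1, j+1`. -/
theorem hilbert_matrix_inverse_entries (p : ℕ)
    (H : Matrix (Fin (p + 1)) (Fin (p + 1)) ℝ)
    (hH : ∀ i j : Fin (p + 1), H i j = 1 / ((i : ℕ) + (j : ℕ) + 1 : ℝ)) :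
    ∀ i j : Fin (p + 1),
      H⁻¹ i j = (-1 : ℝ) ^ ((i : ℕ) + (j : ℕ)) * ((i : ℕ) + (j : ℕ) + 1 : ℝ) *
        (Nat.choose (p + (i : ℕ) + 1) (p - (j : ℕ)) : ℝ) *
        (Nat.choose (p + (j : ℕ) + 1) (p - (i : ℕ)) : ℝ) *
        (Nat.choose ((i : ℕ) + (j : ℕ)) (i : ℕ) : ℝ) ^ 2 := by
  classical
  set N : Matrix (Fin (p + 1)) (Fin (p + 1)) ℝ := Matrix.of fun i j =>
    (-1 : ℝ) ^ ((i : ℕ) + (j : ℕ)) * ((i : ℕ) + (j : ℕ) + 1 : ℝ) *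
      (Nat.choose (p + (i : ℕ) + 1) (p - (j : ℕ)) : ℝ) *
      (Nat.choose (p + (j : ℕ) + 1) (p - (i : ℕ)) : ℝ) *
      (Nat.choose ((i : ℕ) + (j : ℕ)) (i : ℕ) : ℝ) ^ 2 with hNdef
  have fne : ∀ n : ℕ, ((n ! : ℕ) : ℝ) ≠ 0 := fun n =>
    Nat.cast_ne_zero.mpr (Nat.factorial_ne_zero n)
  have sne : ∀ n : ℕ, ((-1 : ℝ)) ^ n ≠ 0 := fun n => pow_ne_zero n (by norm_num)
  have hright : H * N = 1 := by
    ext i j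
    rw [Matrix.mul_apply, Matrix.one_apply]
    set Pi : ℝ := ∏ m : Fin (p + 1), (((i : ℕ) : ℝ) + (m : ℕ) + 1) with hPi
    have hPival : Pi * (((i : ℕ))! : ℝ) = (((i : ℕ) + p + 1)! : ℝ) := prodFull p (i : ℕ)
    have hPine : Pi ≠ 0 := by
      intro h0
      rw [h0, zero_mul] at hPival
      exact fne _ hPival.symm
    set cj : ℝ := (-1 : ℝ) ^ (p + (j : ℕ)) * (((j : ℕ))! : ℝ) ^ 2 * ((p - (j : ℕ))! : ℝ) /
      ((p + (j : ℕ) + 1)! : ℝ) with hcj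
    have hcjne : cj ≠ 0 := by
      rw [hcj]
      apply div_ne_zero
      · exact mul_ne_zero (mul_ne_zero (sne _) (pow_ne_zero 2 (fne _))) (fne _)
      · exact fne _
    have key : ∀ k : Fin (p + 1),
        H i k * N k j * ((-1 : ℝ) ^ p * Pi * cj)
          = (∏ m ∈ Finset.univ.erase j, (((k : ℕ) : ℝ) + (m : ℕ) + 1)) *
            ∏ m ∈ Finset.univ.erase k, ((((k : ℕ) : ℝ) - ((m : ℕ) : ℝ))⁻¹ *
              (-((i : ℕ) : ℝ) - 1 - ((m : ℕ) : ℝ))) := by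
      intro k
      have hik : ((i : ℕ) : ℝ) + (k : ℕ) + 1 ≠ 0 := by positivity
      have hkj : ((k : ℕ) : ℝ) + (j : ℕ) + 1 ≠ 0 := by positivity
      have hsplit : (∏ m ∈ Finset.univ.erase k, ((((k : ℕ) : ℝ) - ((m : ℕ) : ℝ))⁻¹ *
          (-((i : ℕ) : ℝ) - 1 - ((m : ℕ) : ℝ))))
          = ((-1 : ℝ) ^ (p + (k : ℕ)) * (((k : ℕ))! : ℝ) * ((p - (k : ℕ))! : ℝ))⁻¹ *
            ((-1 : ℝ) ^ p * (Pi / (((i : ℕ) : ℝ) + (k : ℕ) + 1))) := by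
        rw [Finset.prod_mul_distrib, Finset.prod_inv_distrib, prodQ]
        congr 1
        have h2 : ∀ m ∈ Finset.univ.erase k,
            (-((i : ℕ) : ℝ) - 1 - ((m : ℕ) : ℝ)) = (-1) * (((i : ℕ) : ℝ) + (m : ℕ) + 1) :=
          fun m _ => by ring
        rw [Finset.prod_congr rfl h2, Finset.prod_mul_distrib, Finset.prod_const,
          Finset.card_erase_of_mem (Finset.mem_univ k), Finset.card_univ, Fintype.card_fin,
          Nat.add_sub_cancel]
        congr 1
        have h3 := Finset.prod_erase_mul Finset.univ
          (fun m : Fin (p + 1) => ((i : ℕ) : ℝ) + (m : ℕ) + 1) (Finset.mem_univ k)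
        rw [eq_div_iff hik]
        exact h3
      have hfirst : (∏ m ∈ Finset.univ.erase j, (((k : ℕ) : ℝ) + (m : ℕ) + 1))
          = (((k : ℕ) + p + 1)! : ℝ) / ((((k : ℕ))! : ℝ) * (((k : ℕ) : ℝ) + (j : ℕ) + 1)) := by
        have h1 := Finset.prod_erase_mul Finset.univ
          (fun m : Fin (p + 1) => ((k : ℕ) : ℝ) + (m : ℕ) + 1) (Finset.mem_univ j)
        have h2 := prodFull p (k : ℕ)
        rw [eq_div_iff (mul_ne_zero (fne _) hkj)]
        calc (∏ m ∈ Finset.univ.erase j, (((k : ℕ) : ℝ) + (m : ℕ) + 1)) *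
              ((((k : ℕ))! : ℝ) * (((k : ℕ) : ℝ) + (j : ℕ) + 1))
            = ((∏ m ∈ Finset.univ.erase j, (((k : ℕ) : ℝ) + (m : ℕ) + 1)) *
              (((k : ℕ) : ℝ) + (j : ℕ) + 1)) * (((k : ℕ))! : ℝ) := by ring
          _ = (∏ m : Fin (p + 1), (((k : ℕ) : ℝ) + (m : ℕ) + 1)) * (((k : ℕ))! : ℝ) := by
              rw [h1]
          _ = (((k : ℕ) + p + 1)! : ℝ) := h2
      rw [hsplit, hfirst, hH, hNdef]
      simp only [Matrix.of_apply]
      rw [hcj]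
      exact keyArith p (j : ℕ) (k : ℕ) (Nat.lt_succ_iff.mp j.isLt) (Nat.lt_succ_iff.mp k.isLt)
        (((i : ℕ) : ℝ) + (k : ℕ) + 1) Pi hik
    have hC : (-1 : ℝ) ^ p * Pi * cj ≠ 0 := mul_ne_zero (mul_ne_zero (sne p) hPine) hcjne
    have hsum : (∑ k, H i k * N k j) * ((-1 : ℝ) ^ p * Pi * cj)
        = ∏ m ∈ Finset.univ.erase j, (((m : ℕ) : ℝ) - ((i : ℕ) : ℝ)) := by
      rw [Finset.sum_mul, Finset.sum_congr rfl (fun k _ => key k)]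
      exact star p i j
    by_cases hij : i = j
    · subst hij
      rw [if_pos rfl]
      rw [prodDerase p i] at hsum
      have hval : (-1 : ℝ) ^ (i : ℕ) * (((i : ℕ))! : ℝ) * ((p - (i : ℕ))! : ℝ)
          = (-1 : ℝ) ^ p * Pi * cj := by
        have hPieq : Pi = (((i : ℕ) + p + 1)! : ℝ) / (((i : ℕ))! : ℝ) := by
          rw [eq_div_iff (fne _)]; exact hPival
        rw [hcj, hPieq, show (i : ℕ) + p + 1 = p + (i : ℕ) + 1 by ring]
        simp only [pow_add]
        rcases Nat.even_or_odd p with hp | hp <;>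
          rcases Nat.even_or_odd (i : ℕ) with hip | hip <;>
        · simp only [hp.neg_one_pow, hip.neg_one_pow, Odd.neg_one_pow, Even.neg_one_pow]
          field_simp
          try ring
      rw [← hval] at hsum
      have hne : (-1 : ℝ) ^ (i : ℕ) * (((i : ℕ))! : ℝ) * ((p - (i : ℕ))! : ℝ) ≠ 0 :=
        mul_ne_zero (mul_ne_zero (sne _) (fne _)) (fne _)
      exact mul_right_cancel₀ hne (by rw [hsum, one_mul])
    · rw [if_neg hij]
      have hzero : ∏ m ∈ Finset.univ.erase j, (((m : ℕ) : ℝ) - ((i : ℕ) : ℝ)) = 0 :=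
        Finset.prod_eq_zero (Finset.mem_erase.mpr ⟨hij, Finset.mem_univ i⟩) (by ring)
      rw [hzero] at hsum
      exact (mul_eq_zero.mp hsum).resolve_right hC
  intro i j
  rw [Matrix.inv_eq_right_inv hright]
  simp only [hNdef, Matrix.of_apply]
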